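/- For the rotlet-above-a-wall velocity field u_w = (u_w, v_w) with u_w = γ(-(y-y_r)/r² - (y-y_im)/r_im² - 2(y-w)/r_im² + 4(y-w)(y-y_im)²/r_im⁴) and v_w = γ((x-x_r)/r² - (x-x_r)/r_im² - 4(y-w)(x-x_im)(y-y_im)/r_im⁴), where x_im = x_r, y_im = 2w - y_r, r² = (x-x_r)²+(y-y_r)², r_im² = (x-x_im)²+(y-y_im)², and y_r > w, the velocity vanishes identically on the wall: u_w(x, w) = 0 and v_w(x, w) = 0 for all x ∈ ℝ. -/

import Mathlib

/-- The rotlet-above-a-wall velocity field vanishes identically on the wall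
`{y = w}`. -/
theorem stmt_10 (γ xr yr w : ℝ) (hyr : yr > w)
    (xim yim : ℝ) (hxim : xim = xr) (hyim : yim = 2 * w - yr)
    (uw vw : ℝ × ℝ → ℝ)
    (huw : ∀ p : ℝ × ℝ,
      uw p = γ * (-(p.2 - yr) / ((p.1 - xr) ^ 2 + (p.2 - yr) ^ 2)
        - (p.2 - yim) / ((p.1 - xim) ^ 2 + (p.2 - yim) ^ 2)
        - 2 * (p.2 - w) / ((p.1 - xim) ^ 2 + (p.2 - yim) ^ 2)
        + 4 * (p.2 - w) * (p.2 - yim) ^ 2 /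
            ((p.1 - xim) ^ 2 + (p.2 - yim) ^ 2) ^ 2))
    (hvw : ∀ p : ℝ × ℝ,
      vw p = γ * ((p.1 - xr) / ((p.1 - xr) ^ 2 + (p.2 - yr) ^ 2)
        - (p.1 - xr) / ((p.1 - xim) ^ 2 + (p.2 - yim) ^ 2)
        - 4 * (p.2 - w) * (p.1 - xim) * (p.2 - yim) /
            ((p.1 - xim) ^ 2 + (p.2 - yim) ^ 2) ^ 2)) :
    ∀ x : ℝ, uw (x, w) = 0 ∧ vw (x, w) = 0 := by
  intro x
  have hd : (x - xr) ^ 2 + (w - yr) ^ 2 ≠ 0 := by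
    have h : (w - yr) ^ 2 > 0 := by nlinarith
    positivity
  have h1 : w - yim = -(w - yr) := by rw [hyim]; ring
  constructor
  · rw [huw (x, w)]
    simp only [hxim]
    rw [h1, neg_sq, sub_self]
    field_simp
    ring
  · rw [hvw (x, w)]
    simp only [hxim]
    rw [h1, neg_sq, sub_self]
    field_simp
    ring
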